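/- arXiv:2207.01675 — 3 statements merged into one kernel-verified Lean document; each statement's English description precedes it below -/
import Mathlib

section
/- Let N ≥ 1, 0 ≤ r ≤ N-1, and let y, x_1, ..., x_r be indeterminates. Define e_j = C(N,j) + (-1)^{j-1} q · [z^{N+1-j}]((y+z)(1+z x_1)···(1+z x_r)) as polynomials in q over ℚ(y, x_1,...,x_r), for 0 ≤ j ≤ N+1 and e_j = 0 otherwise. For integers 0 ≤ k ≤ d, let λ_k = (d^N, k) and let s_{λ_k} be defined by the Jacobi–Trudi determinant in the e_j as above. Then [q^d] s_{λ_k} = (-1)^{(N-1)d} (-y)^k · [t^{d-k}] (1/((1-t)(1-x_1 y t)···(1-x_r y t))). -/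
/- STATEMENT 1: For `N ≥ 1`, `0 ≤ r ≤ N-1`, indeterminates `y, x_1, …, x_r`, and
`e_j = C(N,j) + (-1)^(j-1) q [z^(N+1-j)]((y+z)∏(1+z x_p))` over `ℚ(y,x_1,…,x_r)`,
the Jacobi–Trudi determinant `s_{λ_k}` for `λ_k = (d^N, k)`, `0 ≤ k ≤ d`, satisfies
`[q^d] s_{λ_k} = (-1)^((N-1)d) (-y)^k [t^(d-k)] 1/((1-t)∏(1-x_p y t))`. -/

open Polynomial

/-- The field `ℚ(y, x_1, …, x_r)`: variable `0` is `y`, variable `p.succ` is `x_p`. -/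
noncomputable abbrev KF (r : ℕ) : Type := FractionRing (MvPolynomial (Fin (r + 1)) ℚ)

noncomputable def yv (r : ℕ) : KF r :=
  algebraMap (MvPolynomial (Fin (r + 1)) ℚ) (KF r) (MvPolynomial.X 0)

noncomputable def xv (r : ℕ) (p : Fin r) : KF r :=
  algebraMap (MvPolynomial (Fin (r + 1)) ℚ) (KF r) (MvPolynomial.X p.succ)

/-- The polynomial `(y+z)(1+z x_1)⋯(1+z x_r)` in the variable `z`. -/
noncomputable def Pz (r : ℕ) : Polynomial (KF r) :=
  (Polynomial.C (yv r) + Polynomial.X) *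
    ∏ p : Fin r, (1 + Polynomial.C (xv r p) * Polynomial.X)

/-- `e_j = C(N,j) + (-1)^(j-1) q ⬝ [z^(N+1-j)]((y+z)∏(1+z x_p))`, a polynomial in `q`,
for `0 ≤ j ≤ N+1`, and `e_j = 0` otherwise. -/
noncomputable def elemE (N r : ℕ) (j : ℤ) : Polynomial (KF r) :=
  if 0 ≤ j ∧ j ≤ (N : ℤ) + 1 then
    Polynomial.C ((N.choose j.toNat : ℚ) : KF r) +
      Polynomial.C ((-1 : KF r) ^ (j + 1).toNat * (Pz r).coeff (N + 1 - j.toNat)) *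
        Polynomial.X
  else 0

/-- The conjugate partition `λ'_k = ((N+1)^k, N^(d-k))`, one-indexed. -/
def conjPart (N k : ℕ) (i : ℕ) : ℤ := if i ≤ k then (N : ℤ) + 1 else (N : ℤ)

open Finset
section Abstract
variable {K : Type*} [Field K]

lemma coeff_prod_linear {ι : Type*} [DecidableEq ι] (s : Finset ι) (a b : ι → K) :
    (∏ i ∈ s, (C (a i) + C (b i) * X)).coeff s.card = ∏ i ∈ s, b i := by
  induction s using Finset.induction with
  | empty => simp
  | @insert i s hi ih =>
    have hdeg : (∏ i ∈ s, (C (a i) + C (b i) * X)).natDegree ≤ s.card := by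
      refine (Polynomial.natDegree_prod_le _ _).trans ?_
      refine (Finset.sum_le_card_nsmul s _ 1 fun i _ => ?_).trans (by simp)
      refine (Polynomial.natDegree_add_le _ _).trans ?_
      simp only [natDegree_C, Nat.zero_le, max_le_iff, true_and]
      exact (natDegree_mul_le).trans (by simp)
    rw [Finset.prod_insert hi, Finset.prod_insert hi, Finset.card_insert_of_notMem hi]
    rw [add_mul, coeff_add, coeff_C_mul, mul_assoc, coeff_C_mul, coeff_X_mul,
      Polynomial.coeff_eq_zero_of_natDegree_lt (lt_of_le_of_lt hdeg (Nat.lt_succ_self _)), ih]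
    ring

lemma coeff_det_linear {d : ℕ} (A B : Fin d → Fin d → K) :
    (Matrix.det (Matrix.of fun i j => C (A i j) + C (B i j) * X)).coeff d
      = Matrix.det (Matrix.of B) := by
  rw [Matrix.det_apply, Matrix.det_apply, Polynomial.finset_sum_coeff]
  refine Finset.sum_congr rfl fun σ _ => ?_
  simp only [Units.smul_def, Polynomial.coeff_smul, Matrix.of_apply]
  congr 1
  simpa using coeff_prod_linear (Finset.univ : Finset (Fin d))
    (fun i => A (σ i) i) (fun i => B (σ i) i)

/-- The Hessenberg–Toeplitz style matrix with first column `c (s+a)`. -/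
noncomputable def MatD (c : ℕ → K) (m s : ℕ) : Matrix (Fin m) (Fin m) K :=
  Matrix.of fun a b =>
    if (b : ℕ) = 0 then c (s + a) else if (b : ℕ) ≤ (a : ℕ) + 1 then c ((a : ℕ) + 1 - b) else 0

lemma detD_rec (c : ℕ → K) (m s : ℕ) :
    (MatD c (m + 2) s).det
      = c s * (MatD c (m + 1) 1).det - c 0 * (MatD c (m + 1) (s + 1)).det := by
  rw [Matrix.det_succ_row_zero, Fin.sum_univ_succ, Fin.sum_univ_succ]
  have h0 : ∀ j : Fin m, MatD c (m + 2) s 0 j.succ.succ = 0 := by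
    intro j
    simp [MatD]
  rw [Finset.sum_eq_zero (fun j _ => by rw [h0]; ring)]
  have e1 : (MatD c (m + 2) s).submatrix Fin.succ ((0 : Fin (m + 2)).succAbove)
      = MatD c (m + 1) 1 := by
    ext a b
    simp only [Matrix.submatrix_apply, Fin.succAbove_zero, MatD, Matrix.of_apply,
      Fin.val_succ]
    split_ifs <;> first | rfl | (congr 1; omega) | omega | exact (‹False›).elim
  have e2 : (MatD c (m + 2) s).submatrix Fin.succ (((0 : Fin (m + 1)).succ).succAbove)
      = MatD c (m + 1) (s + 1) := by
    have hco : ∀ b : Fin (m + 1), ((((0 : Fin (m + 1)).succ).succAbove b) : ℕ)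
        = if (b : ℕ) = 0 then 0 else (b : ℕ) + 1 := by
      intro b
      induction b using Fin.cases with
      | zero => simp [Fin.succ_succAbove_zero]
      | succ j => simp [Fin.succ_succAbove_succ, Fin.succAbove_zero]
    ext a b
    simp only [Matrix.submatrix_apply, MatD, Matrix.of_apply, Fin.val_succ, hco]
    split_ifs <;> first | rfl | (congr 1; omega) | omega | exact (‹False›).elim
  rw [e1, e2]
  simp only [MatD, Matrix.of_apply, Fin.val_zero, Fin.val_succ, Fin.isValue, pow_zero,
    pow_one, add_zero]
  norm_num
  ring

lemma conv_key (c u : ℕ → K)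
    (hc : ∀ n, ∑ i ∈ Finset.range (n + 1), c i * u (n - i) = if n = 0 then 1 else 0) (m : ℕ) :
    ∑ j ∈ Finset.range (m + 1), c (1 + j) * u (m - j) = -(c 0 * u (m + 1)) := by
  have h := hc (m + 1)
  rw [if_neg (Nat.succ_ne_zero m), Finset.sum_range_succ'] at h
  have h2 : ∀ i ∈ Finset.range (m + 1),
      c (i + 1) * u (m + 1 - (i + 1)) = c (1 + i) * u (m - i) := by
    intro i hi
    have hsub : m + 1 - (i + 1) = m - i := by omega
    rw [hsub, Nat.add_comm i 1]
  rw [Finset.sum_congr rfl h2, Nat.sub_zero] at h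
  linear_combination h

lemma detD_closed (c u : ℕ → K)
    (hc : ∀ n, ∑ i ∈ Finset.range (n + 1), c i * u (n - i) = if n = 0 then 1 else 0) :
    ∀ m s, (MatD c (m + 1) s).det
      = (-1) ^ m * c 0 ^ (m + 1) * ∑ j ∈ Finset.range (m + 1), c (s + j) * u (m - j) := by
  have h00 : c 0 * u 0 = 1 := by simpa using hc 0
  intro m
  induction m with
  | zero =>
    intro s
    have h1 : (MatD c 1 s).det = c s := by
      rw [Matrix.det_fin_one]
      simp [MatD]
    rw [h1]
    simp only [zero_add, pow_zero, pow_one, one_mul, Finset.sum_range_one,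
      add_zero, Nat.sub_zero]
    linear_combination (-(c s)) * h00
  | succ m ih =>
    intro s
    have hsplit : ∑ j ∈ Finset.range (m + 2), c (s + j) * u (m + 1 - j)
        = c s * u (m + 1) + ∑ j ∈ Finset.range (m + 1), c (s + 1 + j) * u (m - j) := by
      rw [Finset.sum_range_succ']
      have h2 : ∀ i ∈ Finset.range (m + 1),
          c (s + (i + 1)) * u (m + 1 - (i + 1)) = c (s + 1 + i) * u (m - i) := by
        intro i hi
        have hsub : m + 1 - (i + 1) = m - i := by omega
        have hadd : s + (i + 1) = s + 1 + i := by omega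
        rw [hsub, hadd]
      rw [Finset.sum_congr rfl h2, Nat.sub_zero, add_zero, add_comm]
    rw [detD_rec, ih 1, ih (s + 1), conv_key c u hc m, hsplit]
    ring

lemma detD_formula (c u : ℕ → K)
    (hc : ∀ n, ∑ i ∈ Finset.range (n + 1), c i * u (n - i) = if n = 0 then 1 else 0) (m : ℕ) :
    (MatD c m 1).det = (-1) ^ m * c 0 ^ (m + 1) * u m := by
  have h00 : c 0 * u 0 = 1 := by simpa using hc 0
  cases m with
  | zero =>
    simp only [Matrix.det_fin_zero, pow_zero, one_mul, pow_one]
    linear_combination -h00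
  | succ m =>
    rw [detD_closed c u hc m 1, conv_key c u hc m]
    ring

end Abstract

section MainSetup

lemma yv_ne_zero (r : ℕ) : yv r ≠ 0 := by
  unfold yv
  intro h
  exact MvPolynomial.X_ne_zero (0 : Fin (r + 1))
    ((IsFractionRing.to_map_eq_zero_iff).mp h)

lemma Pz_coeff_zero (r : ℕ) : (Pz r).coeff 0 = yv r := by
  rw [Polynomial.coeff_zero_eq_eval_zero]
  simp [Pz, Polynomial.eval_prod]

lemma Pz_natDegree_le (r : ℕ) : (Pz r).natDegree ≤ r + 1 := by
  unfold Pz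
  refine (natDegree_mul_le).trans ?_
  have h1 : (C (yv r) + X : Polynomial (KF r)).natDegree ≤ 1 := by
    refine (natDegree_add_le _ _).trans ?_
    simp [natDegree_X_le]
  have h2 : (∏ p : Fin r, (1 + C (xv r p) * X : Polynomial (KF r))).natDegree ≤ r := by
    refine (natDegree_prod_le _ _).trans ?_
    refine (Finset.sum_le_card_nsmul _ _ 1 fun p _ => ?_).trans (by simp)
    refine (natDegree_add_le _ _).trans ?_
    simp only [natDegree_one, Nat.zero_le, max_le_iff, true_and]
    exact (natDegree_mul_le).trans (by simp [natDegree_X_le])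
  omega

lemma Pz_coeff_hi (r n : ℕ) (hn : r + 1 < n) : (Pz r).coeff n = 0 :=
  Polynomial.coeff_eq_zero_of_natDegree_lt (lt_of_le_of_lt (Pz_natDegree_le r) hn)

/-- `Pz` as a power series. -/
noncomputable def PzS (r : ℕ) : PowerSeries (KF r) := (Pz r : PowerSeries (KF r))

/-- Coefficients of the inverse power series of `Pz`. -/
noncomputable def uu (r : ℕ) (n : ℕ) : KF r := PowerSeries.coeff (R := KF r) n (PzS r)⁻¹

lemma PzS_const (r : ℕ) : PowerSeries.constantCoeff (R := KF r) (PzS r) = yv r := by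
  rw [PzS, Polynomial.constantCoeff_coe, Pz_coeff_zero]

lemma hconv (r : ℕ) : ∀ n, ∑ i ∈ Finset.range (n + 1), (Pz r).coeff i * uu r (n - i)
    = if n = 0 then 1 else 0 := by
  intro n
  have h1 : PzS r * (PzS r)⁻¹ = 1 :=
    PowerSeries.mul_inv_cancel _ (by rw [PzS_const]; exact yv_ne_zero r)
  have h2 := congrArg (PowerSeries.coeff (R := KF r) n) h1
  rw [PowerSeries.coeff_mul, PowerSeries.coeff_one,
    Finset.Nat.sum_antidiagonal_eq_sum_range_succ_mk] at h2
  rw [← h2]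
  refine Finset.sum_congr rfl fun i hi => ?_
  rw [PzS, Polynomial.coeff_coe]
  rfl

lemma rescale_C' {K : Type*} [CommRing K] (a y : K) :
    PowerSeries.rescale a (PowerSeries.C (R := K) y) = PowerSeries.C (R := K) y := by
  ext n
  rw [PowerSeries.coeff_rescale]
  simp only [PowerSeries.coeff_C]
  split_ifs with h
  · subst h; simp
  · simp

lemma rescale_PzS (r : ℕ) :
    PowerSeries.rescale (-(yv r)) (PzS r)
      = PowerSeries.C (R := KF r) (yv r) * ((1 - PowerSeries.X) *
        ∏ p : Fin r, (1 - PowerSeries.C (R := KF r) (xv r p * yv r) * PowerSeries.X)) := by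
  rw [PzS, Pz]
  rw [Polynomial.coe_mul, Polynomial.coe_add, Polynomial.coe_C, Polynomial.coe_X]
  have hprod : ((∏ p : Fin r, (1 + C (xv r p) * X) : Polynomial (KF r)) : PowerSeries (KF r))
      = ∏ p : Fin r, (1 + PowerSeries.C (R := KF r) (xv r p) * PowerSeries.X) := by
    rw [← Polynomial.coeToPowerSeries.ringHom_apply, map_prod]
    exact Finset.prod_congr rfl fun p _ => by
      simp [Polynomial.coeToPowerSeries.ringHom_apply]
  rw [hprod, map_mul, map_add, map_prod, rescale_C', PowerSeries.rescale_X]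
  have hfac : ∀ p : Fin r,
      PowerSeries.rescale (-(yv r)) (1 + PowerSeries.C (R := KF r) (xv r p) * PowerSeries.X)
        = 1 - PowerSeries.C (R := KF r) (xv r p * yv r) * PowerSeries.X := by
    intro p
    rw [map_add, map_one, map_mul, rescale_C', PowerSeries.rescale_X, map_neg, map_mul]
    ring
  rw [Finset.prod_congr rfl fun p _ => hfac p, map_neg]
  ring

lemma coeff_Ginv (r n : ℕ) :
    PowerSeries.coeff (R := KF r) n
        (((1 - PowerSeries.X) *
          ∏ p : Fin r, (1 - PowerSeries.C (R := KF r) (xv r p * yv r) * PowerSeries.X))⁻¹)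
      = yv r * ((-(yv r)) ^ n * uu r n) := by
  set A := (1 - PowerSeries.X) *
      ∏ p : Fin r, (1 - PowerSeries.C (R := KF r) (xv r p * yv r) * PowerSeries.X) with hA
  have hAc : PowerSeries.constantCoeff (R := KF r) A = 1 := by
    rw [hA, map_mul, map_prod]
    simp
  have hinv : A⁻¹ = PowerSeries.C (R := KF r) (yv r) *
      PowerSeries.rescale (-(yv r)) (PzS r)⁻¹ := by
    rw [PowerSeries.inv_eq_iff_mul_eq_one (by rw [hAc]; exact one_ne_zero)]
    have h2 : PowerSeries.C (R := KF r) (yv r) * A = PowerSeries.rescale (-(yv r)) (PzS r) :=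
      (rescale_PzS r).symm
    calc PowerSeries.C (R := KF r) (yv r) * PowerSeries.rescale (-(yv r)) (PzS r)⁻¹ * A
        = PowerSeries.rescale (-(yv r)) (PzS r)⁻¹ *
            (PowerSeries.C (R := KF r) (yv r) * A) := by ring
      _ = PowerSeries.rescale (-(yv r)) ((PzS r)⁻¹ * PzS r) := by rw [h2, map_mul]
      _ = 1 := by
          rw [PowerSeries.inv_mul_cancel _ (by rw [PzS_const]; exact yv_ne_zero r), map_one]
  rw [hinv, PowerSeries.coeff_C_mul, PowerSeries.coeff_rescale]
  rfl

end MainSetup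

noncomputable def Af (N r : ℕ) (J : ℤ) : KF r :=
  if 0 ≤ J ∧ J ≤ (N : ℤ) + 1 then ((N.choose J.toNat : ℚ) : KF r) else 0

noncomputable def Bf (N r : ℕ) (J : ℤ) : KF r :=
  if 0 ≤ J ∧ J ≤ (N : ℤ) + 1 then
    (-1 : KF r) ^ ((J + 1).toNat) * (Pz r).coeff (N + 1 - J.toNat) else 0

lemma elemE_eq (N r : ℕ) (J : ℤ) :
    elemE N r J = C (Af N r J) + C (Bf N r J) * X := by
  unfold elemE Af Bf
  split_ifs with h
  · rfl
  · simp

/-- The integer index appearing in the Jacobi–Trudi matrix. -/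
def Jx (N k : ℕ) (i j : ℕ) : ℤ := conjPart N k (i + 1) - ((i : ℤ) + 1) + ((j : ℤ) + 1)

lemma g_upper (N r k : ℕ) (a b : ℕ) (ha : a < k) (hab : a < b) : Bf N r (Jx N k a b) = 0 := by
  have hJ : Jx N k a b = (N : ℤ) + 1 + (b - a : ℤ) := by
    unfold Jx conjPart
    rw [if_pos (by omega)]
    push_cast
    ring
  rw [Bf, if_neg]
  rw [hJ]
  intro ⟨h1, h2⟩
  omega

lemma g_diag (N r k : ℕ) (a : ℕ) (ha : a < k) :
    Bf N r (Jx N k a a) = (-1 : KF r) ^ (N + 2) * (Pz r).coeff 0 := by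
  have hJ : Jx N k a a = (N : ℤ) + 1 := by
    unfold Jx conjPart
    rw [if_pos (by omega)]
    ring
  rw [Bf, hJ, if_pos ⟨by omega, le_refl _⟩]
  have h1 : ((N : ℤ) + 1 + 1).toNat = N + 2 := by omega
  have h2 : N + 1 - ((N : ℤ) + 1).toNat = 0 := by omega
  rw [h1, h2]

lemma g_BR (N r k : ℕ) (hN : 1 ≤ N) (hr : r ≤ N - 1) (m : ℕ) (a b : Fin m) :
    Bf N r (Jx N k (k + a) (k + b))
      = (-1 : KF r) ^ (N + 1 + (a : ℕ) + (b : ℕ))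
        * MatD (fun n => (Pz r).coeff n) m 1 a b := by
  have hJ : Jx N k (k + a) (k + b) = (N : ℤ) + (b : ℕ) - (a : ℕ) := by
    unfold Jx conjPart
    rw [if_neg (by omega)]
    push_cast
    ring
  rw [Bf, hJ, MatD, Matrix.of_apply]
  by_cases h1 : (b : ℕ) ≤ (a : ℕ) + 1
  · by_cases h2 : (a : ℕ) ≤ N + (b : ℕ)
    · rw [if_pos ⟨by omega, by omega⟩]
      have ht1 : ((N : ℤ) + (b : ℕ) - (a : ℕ) + 1).toNat = N + 1 + (b : ℕ) - (a : ℕ) := by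
        omega
      have ht2 : N + 1 - ((N : ℤ) + (b : ℕ) - (a : ℕ)).toNat = (a : ℕ) + 1 - (b : ℕ) := by
        omega
      rw [ht1, ht2]
      have hsg : (-1 : KF r) ^ (N + 1 + (b : ℕ) - (a : ℕ))
          = (-1 : KF r) ^ (N + 1 + (a : ℕ) + (b : ℕ)) := by
        rw [neg_one_pow_eq_pow_mod_two, neg_one_pow_eq_pow_mod_two
          (n := N + 1 + (a : ℕ) + (b : ℕ))]
        congr 1
        omega
      rw [hsg]
      congr 1
      split_ifs with hb
      · congr 1
        omega
      · rfl
    · rw [if_neg (by omega)]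
      have hz : ∀ t, r + 1 < t → (Pz r).coeff t = 0 := Pz_coeff_hi r
      split_ifs with hb
      · rw [hz (1 + (a : ℕ)) (by omega), mul_zero]
      · rw [hz ((a : ℕ) + 1 - (b : ℕ)) (by omega), mul_zero]
  · rw [if_neg (by omega), if_neg (by omega), if_neg h1, mul_zero]

lemma final_scalar {K : Type*} [Field K] (y u P : K) (N k m : ℕ) (hN : 1 ≤ N)
    (hPP : P * P = 1) :
    ((-1 : K) ^ (N + 2) * y) ^ k * ((((-1 : K) ^ (N + 1)) ^ m * P)
        * (P * ((-1 : K) ^ m * y ^ (m + 1) * u)))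
      = (-1 : K) ^ ((N - 1) * (k + m)) * (-y) ^ k * (y * ((-y) ^ m * u)) := by
  obtain ⟨n, rfl⟩ : ∃ n, N = n + 1 := ⟨N - 1, by omega⟩
  simp only [Nat.add_sub_cancel]
  set t := (-1 : K) ^ n with ht
  have h1 : (-1 : K) ^ (n + 1 + 2) = -t := by rw [pow_add, pow_succ, ht]; ring
  have h2 : (-1 : K) ^ (n + 1 + 1) = t := by rw [pow_succ, pow_succ, ht]; ring
  have h3 : (-1 : K) ^ (n * (k + m)) = t ^ k * t ^ m := by
    rw [Nat.left_distrib, pow_add, pow_mul, pow_mul]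
  rw [h1, h2, h3]
  have hyk : (-y) ^ k = (-1 : K) ^ k * y ^ k := by rw [neg_pow]
  have hym : (-y) ^ m = (-1 : K) ^ m * y ^ m := by rw [neg_pow]
  have htk : (-t * y) ^ k = (-1 : K) ^ k * t ^ k * y ^ k := by
    rw [neg_mul, neg_pow, mul_pow]; ring
  rw [hyk, hym, htk]
  linear_combination ((-1 : K) ^ k * t ^ k * y ^ k * t ^ m * (-1 : K) ^ m * y ^ (m + 1) * u)
    * hPP

theorem coeff_qd_jacobiTrudi_schur_multi (N r d k : ℕ) (hN : 1 ≤ N) (hr : r ≤ N - 1)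
    (hk : k ≤ d) :
    (Matrix.det (Matrix.of fun i j : Fin d =>
        elemE N r (conjPart N k ((i : ℕ) + 1) - ((i : ℕ) + 1) + ((j : ℕ) + 1)))).coeff d
      = (-1) ^ ((N - 1) * d) * (-(yv r)) ^ k *
        PowerSeries.coeff (R := KF r) (d - k)
          (((1 - PowerSeries.X) *
            ∏ p : Fin r, (1 - PowerSeries.C (R := KF r) (xv r p * yv r) * PowerSeries.X))⁻¹) := by
  obtain ⟨m, rfl⟩ : ∃ m, d = k + m := ⟨d - k, by omega⟩
  have hMeq : (Matrix.of fun i j : Fin (k + m) =>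
      elemE N r (conjPart N k ((i : ℕ) + 1) - ((i : ℕ) + 1) + ((j : ℕ) + 1)))
      = Matrix.of (fun i j : Fin (k + m) =>
        C (Af N r (Jx N k i j)) + C (Bf N r (Jx N k i j)) * X) := by
    ext i j
    have harg : (conjPart N k ((i : ℕ) + 1) : ℤ) - ((i : ℕ) + 1) + ((j : ℕ) + 1)
        = Jx N k i j := by
      unfold Jx; push_cast; ring
    rw [Matrix.of_apply, Matrix.of_apply, harg, elemE_eq]
  rw [hMeq]
  have hcoeff := coeff_det_linear (d := k + m)
    (fun i j : Fin (k + m) => Af N r (Jx N k i j))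
    (fun i j : Fin (k + m) => Bf N r (Jx N k i j))
  rw [hcoeff]
  rw [show k + m - k = m from by omega, coeff_Ginv r m]
  set cc : ℕ → KF r := fun n => (Pz r).coeff n with hcc
  -- block decomposition
  rw [← Matrix.det_submatrix_equiv_self finSumFinEquiv
    (Matrix.of fun i j : Fin (k + m) => Bf N r (Jx N k (i : ℕ) (j : ℕ)))]
  have hsub : (Matrix.of fun i j : Fin (k + m) => Bf N r (Jx N k (i : ℕ) (j : ℕ))).submatrix
        finSumFinEquiv finSumFinEquiv
      = Matrix.fromBlocks
          (Matrix.of fun p q : Fin k => Bf N r (Jx N k (p : ℕ) (q : ℕ)))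
          0
          (Matrix.of fun (a : Fin m) (q : Fin k) => Bf N r (Jx N k (k + (a : ℕ)) (q : ℕ)))
          (Matrix.of fun a b : Fin m => Bf N r (Jx N k (k + (a : ℕ)) (k + (b : ℕ)))) := by
    ext i j
    cases i with
    | inl p =>
      cases j with
      | inl q =>
        simp [finSumFinEquiv_apply_left, Matrix.fromBlocks]
      | inr b =>
        simp only [Matrix.submatrix_apply, finSumFinEquiv_apply_left,
          finSumFinEquiv_apply_right, Matrix.fromBlocks_apply₁₂, Matrix.zero_apply,
          Matrix.of_apply]
        exact g_upper N r k p (k + (b : ℕ)) p.isLt (by omega)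
    | inr a =>
      cases j with
      | inl q =>
        simp [finSumFinEquiv_apply_left, finSumFinEquiv_apply_right, Matrix.fromBlocks]
      | inr b =>
        simp [finSumFinEquiv_apply_right, Matrix.fromBlocks]
  rw [hsub, Matrix.det_fromBlocks_zero₁₂]
  -- top-left block
  have hTL : (Matrix.of fun p q : Fin k => Bf N r (Jx N k (p : ℕ) (q : ℕ))).det
      = ((-1 : KF r) ^ (N + 2) * cc 0) ^ k := by
    rw [Matrix.det_of_lowerTriangular _ ?_]
    · simp only [Matrix.of_apply]
      rw [Finset.prod_congr rfl fun (p : Fin k) _ => g_diag N r k (p : ℕ) p.isLt,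
        Finset.prod_const, Finset.card_univ, Fintype.card_fin]
    · intro i j hij
      exact g_upper N r k (i : ℕ) (j : ℕ) i.isLt (by simpa using hij)
  -- bottom-right block
  set P := ∏ a : Fin m, (-1 : KF r) ^ (a : ℕ) with hP
  have hfac : ∀ a : Fin m, (-1 : KF r) ^ (a : ℕ) * (-1 : KF r) ^ (a : ℕ) = 1 := fun a => by
    rw [← pow_add]; exact Even.neg_one_pow ⟨(a : ℕ), rfl⟩
  have hPP : P * P = 1 := by
    rw [hP, ← Finset.prod_mul_distrib, Finset.prod_congr rfl fun a _ => hfac a,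
      Finset.prod_const_one]
  have hBR : (Matrix.of fun a b : Fin m => Bf N r (Jx N k (k + (a : ℕ)) (k + (b : ℕ)))).det
      = (((-1 : KF r) ^ (N + 1)) ^ m * P) * (P * ((-1) ^ m * cc 0 ^ (m + 1) * uu r m)) := by
    have h2 : (Matrix.of fun a b : Fin m => Bf N r (Jx N k (k + (a : ℕ)) (k + (b : ℕ))))
        = Matrix.of (fun a b : Fin m => ((-1 : KF r) ^ (N + 1 + (a : ℕ))) *
            (Matrix.of (fun a b : Fin m => (-1 : KF r) ^ (b : ℕ) * MatD cc m 1 a b) a b)) := by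
      ext a b
      rw [Matrix.of_apply, Matrix.of_apply, g_BR N r k hN hr m a b]
      rw [show N + 1 + (a : ℕ) + (b : ℕ) = (N + 1 + (a : ℕ)) + (b : ℕ) from rfl, pow_add]
      rw [Matrix.of_apply]
      ring
    rw [h2, Matrix.det_mul_column, Matrix.det_mul_row, detD_formula cc (uu r) (hconv r) m]
    have hsp : ∀ a : Fin m, (-1 : KF r) ^ (N + 1 + (a : ℕ))
        = (-1 : KF r) ^ (N + 1) * (-1 : KF r) ^ (a : ℕ) := fun a => pow_add _ _ _
    have hprodv : (∏ a : Fin m, (-1 : KF r) ^ (N + 1 + (a : ℕ)))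
        = ((-1 : KF r) ^ (N + 1)) ^ m * P := by
      rw [Finset.prod_congr rfl fun a _ => hsp a, Finset.prod_mul_distrib,
        Finset.prod_const, Finset.card_univ, Fintype.card_fin, hP]
    rw [hprodv, hP]
  rw [hTL, hBR]
  have hcc0 : cc 0 = yv r := Pz_coeff_zero r
  rw [hcc0]
  exact final_scalar (yv r) (uu r m) P N k m hN hPP
end

section
/- For all integers u, d ≥ 0, and an indeterminate y, the polynomial identity Σ_{k=0}^{d} C(u,k) C(-u+d, d-k) (1-y)^k = Σ_{k=0}^{d} C(u,k) (-y)^k holds in ℚ[y]. -/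
/- STATEMENT 5: For integers `u` and `d ≥ 0`, in `ℚ[y]`:
`Σ_{k=0}^d C(u,k) C(-u+d, d-k) (1-y)^k = Σ_{k=0}^d C(u,k) (-y)^k`. -/

/-- Generalized binomial coefficient `C(a,k) ∈ ℚ`. -/
noncomputable def gchoose (a : ℤ) (k : ℕ) : ℚ :=
  (∏ i ∈ Finset.range k, ((a : ℚ) - (i : ℚ))) / (k.factorial : ℚ)

lemma descP_eval (q : ℚ) (k : ℕ) :
    Polynomial.eval q (descPochhammer ℚ k) = ∏ i ∈ Finset.range k, (q - (i : ℚ)) := by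
  induction k with
  | zero => simp
  | succ n ih => rw [descPochhammer_succ_eval, ih, Finset.prod_range_succ]

lemma gchoose_eq (a : ℤ) (k : ℕ) : gchoose a k = Ring.choose ((a : ℚ)) k := by
  have h1 : Polynomial.smeval (descPochhammer ℤ k) ((a:ℚ))
      = (k.factorial : ℕ) • Ring.choose ((a : ℚ)) k :=
    Ring.descPochhammer_eq_factorial_smul_choose _ _
  have h2 : Polynomial.smeval (descPochhammer ℤ k) ((a:ℚ))
      = ∏ i ∈ Finset.range k, ((a : ℚ) - (i : ℚ)) := by
    rw [← Polynomial.aeval_eq_smeval, ← Polynomial.eval_map_algebraMap, descPochhammer_map,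
      descP_eval]
  have hf : (k.factorial : ℚ) ≠ 0 := by positivity
  rw [gchoose, ← h2, h1, nsmul_eq_mul]
  field_simp

open Finset in
lemma key (u : ℤ) (d n : ℕ) (hn : n ≤ d) :
    ∑ k ∈ Finset.range (d+1), gchoose u k * gchoose (-u + d) (d-k) * (k.choose n : ℚ)
      = gchoose u n := by
  have hcast : (((-u + d : ℤ)) : ℚ) = -(u:ℚ) + d := by push_cast; ring
  simp only [gchoose_eq, hcast]
  set q := (u:ℚ) with hq
  have hd : d + 1 = n + (d - n + 1) := by omega
  rw [hd, Finset.sum_range_add]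
  have hz : ∑ k ∈ Finset.range n,
      Ring.choose q k * Ring.choose (-q + d) (d-k) * (k.choose n : ℚ) = 0 := by
    apply Finset.sum_eq_zero; intro k hk
    rw [Nat.choose_eq_zero_of_lt (Finset.mem_range.mp hk)]; simp
  rw [hz, zero_add]
  have hterm : ∀ j,
      Ring.choose q (n+j) * Ring.choose (-q + d) (d-(n+j)) * (((n+j).choose n : ℕ) : ℚ)
      = Ring.choose q n * (Ring.choose (q - n) j * Ring.choose (-q + d) ((d-n)-j)) := by
    intro j
    have h := Ring.choose_smul_choose q (n := n+j) (k := n) (Nat.le_add_right n j)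
    rw [Nat.add_sub_cancel_left, nsmul_eq_mul] at h
    have hdn : d - (n+j) = d - n - j := by omega
    rw [hdn]
    calc Ring.choose q (n+j) * Ring.choose (-q + d) (d-n-j) * (((n+j).choose n : ℕ) : ℚ)
        = (((n+j).choose n : ℕ) : ℚ) * Ring.choose q (n+j) * Ring.choose (-q + d) (d-n-j) := by
          ring
      _ = _ := by rw [h]; ring
  simp only [hterm, ← Finset.mul_sum]
  have hvdm : ∑ j ∈ Finset.range (d - n + 1),
      Ring.choose (q - n) j * Ring.choose (-q + d) ((d-n)-j) = 1 := by
    rw [← Finset.Nat.sum_antidiagonal_eq_sum_range_succ_mk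
      (fun ij => Ring.choose (q - n) ij.1 * Ring.choose (-q + d) ij.2),
      ← Ring.add_choose_eq (d - n) (Commute.all _ _)]
    have : q - n + (-q + d) = ((d - n : ℕ) : ℚ) := by
      rw [Nat.cast_sub hn]; ring
    rw [this, Ring.choose_natCast, Nat.choose_self, Nat.cast_one]
  rw [hvdm, mul_one]

open Polynomial in
theorem binomial_poly_identity (u : ℤ) (d : ℕ) :
    ∑ k ∈ Finset.range (d + 1),
        Polynomial.C (gchoose u k * gchoose (-u + d) (d - k)) * (1 - Polynomial.X) ^ k
      = ∑ k ∈ Finset.range (d + 1),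
          Polynomial.C (gchoose u k) * (-(Polynomial.X : Polynomial ℚ)) ^ k := by
  have hexp : ∀ k ∈ Finset.range (d+1), ((1 : Polynomial ℚ) - Polynomial.X) ^ k
      = ∑ m ∈ Finset.range (d+1), Polynomial.C ((k.choose m : ℚ)) * (-Polynomial.X) ^ m := by
    intro k hk
    rw [sub_eq_neg_add, add_pow]
    rw [Finset.sum_subset (Finset.range_subset_range.mpr
      (Nat.succ_le_succ (Nat.lt_succ_iff.mp (Finset.mem_range.mp hk))))]
    · apply Finset.sum_congr rfl
      intro m _
      rw [one_pow, mul_one, Polynomial.C_eq_natCast, mul_comm]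
    · intro m _ hm
      rw [Nat.choose_eq_zero_of_lt (by simpa using hm)]
      simp
  calc ∑ k ∈ Finset.range (d + 1),
        Polynomial.C (gchoose u k * gchoose (-u + d) (d - k)) * (1 - Polynomial.X) ^ k
      = ∑ k ∈ Finset.range (d + 1), ∑ m ∈ Finset.range (d+1),
          Polynomial.C (gchoose u k * gchoose (-u + d) (d - k) * (k.choose m : ℚ))
            * (-Polynomial.X) ^ m := by
        refine Finset.sum_congr rfl fun k hk => ?_
        rw [hexp k hk, Finset.mul_sum]
        refine Finset.sum_congr rfl fun m _ => ?_
        simp [map_mul]; ring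
    _ = ∑ m ∈ Finset.range (d + 1), Polynomial.C
          (∑ k ∈ Finset.range (d+1),
            gchoose u k * gchoose (-u + d) (d - k) * (k.choose m : ℚ))
            * (-Polynomial.X) ^ m := by
        rw [Finset.sum_comm]
        refine Finset.sum_congr rfl fun m _ => ?_
        rw [map_sum, Finset.sum_mul]
    _ = _ := by
        refine Finset.sum_congr rfl fun m hm => ?_
        rw [key u d m (Nat.lt_succ_iff.mp (Finset.mem_range.mp hm))]
end

section
/- Fix an integer N ≥ 1 and integers χ, d. Then for every integer d ≥ 0 and 0 ≤ k ≤ d: C(-χ - N + d(N+1), k) = C(-χ + d(N+1), k) - Σ_{ℓ=1}^{k} (N/ℓ) C((N+1)(ℓ-1), ℓ-1) C(-χ + (d-ℓ)(N+1), k-ℓ). -/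
open Finset

lemma gchoose_zero (a : ℤ) : gchoose a 0 = 1 := by simp [gchoose]

lemma gchoose_one (a : ℤ) : gchoose a 1 = (a : ℚ) := by
  simp [gchoose]

lemma prod_shift (a : ℤ) (k : ℕ) :
    (∏ i ∈ range (k+1), ((a : ℚ) - (i : ℚ)))
      = (a : ℚ) * ∏ i ∈ range k, (((a - 1 : ℤ) : ℚ) - (i : ℚ)) := by
  rw [Finset.prod_range_succ']
  have h : ∀ i ∈ range k, ((a:ℚ) - (((i+1 : ℕ)) : ℚ)) = (((a - 1 : ℤ) : ℚ) - (i : ℚ)) := by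
    intro i _; push_cast; ring
  rw [Finset.prod_congr rfl h]
  push_cast; ring

lemma gchoose_pascal (a : ℤ) (k : ℕ) :
    gchoose a (k+1) = gchoose (a-1) (k+1) + gchoose (a-1) k := by
  unfold gchoose
  rw [prod_shift a k, Finset.prod_range_succ, Nat.factorial_succ]
  have h0 : (k.factorial : ℚ) ≠ 0 := by exact_mod_cast k.factorial_ne_zero
  have h1 : ((k:ℚ) + 1) ≠ 0 := by positivity
  push_cast
  field_simp
  ring

lemma gchoose_absorb (a : ℤ) (k : ℕ) :
    ((k:ℚ)+1) * gchoose a (k+1) = (a : ℚ) * gchoose (a-1) k := by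
  unfold gchoose
  rw [prod_shift a k, Nat.factorial_succ]
  have h0 : (k.factorial : ℚ) ≠ 0 := by exact_mod_cast k.factorial_ne_zero
  have h1 : ((k:ℚ) + 1) ≠ 0 := by positivity
  push_cast
  field_simp

lemma gchoose_natCast (p k : ℕ) : gchoose (p : ℤ) k = (p.choose k : ℚ) := by
  have hP : (∏ i ∈ range k, (((p:ℤ) : ℚ) - (i : ℚ))) = (p.descFactorial k : ℚ) := by
    induction k with
    | zero => simp
    | succ k ih =>
      rw [Finset.prod_range_succ, ih, Nat.descFactorial_succ]
      rcases le_or_gt (k+1) p with h | h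
      · push_cast [Nat.cast_sub (by omega : k ≤ p)]
        ring
      · rcases Nat.lt_or_ge p k with h2 | h2
        · rw [Nat.descFactorial_eq_zero_iff_lt.2 h2]; simp
        · have hpk : p = k := by omega
          subst hpk
          simp
  unfold gchoose
  rw [hP, Nat.descFactorial_eq_factorial_mul_choose]
  have h0 : (k.factorial : ℚ) ≠ 0 := by exact_mod_cast k.factorial_ne_zero
  push_cast
  field_simp

/-- Rothe numbers `A_k(x,z) = (x/(x+kz)) C(x+kz, k)`, written without division. -/
noncomputable def Acoef (x z : ℤ) : ℕ → ℚ
  | 0 => 1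
  | k+1 => gchoose (x + (k+1 : ℕ) * z) (k+1) - (z : ℚ) * gchoose (x + (k+1 : ℕ) * z - 1) k

lemma Acoef_zero (x z : ℤ) : Acoef x z 0 = 1 := rfl

lemma Acoef_succ (x z : ℤ) (k : ℕ) :
    Acoef x z (k+1)
      = gchoose (x + (k+1 : ℕ) * z) (k+1) - (z : ℚ) * gchoose (x + (k+1 : ℕ) * z - 1) k := rfl

lemma Acoef_rec (x z : ℤ) (k : ℕ) :
    Acoef x z (k+1) = Acoef (x-1) z (k+1) + Acoef (x+z-1) z k := by
  cases k with
  | zero =>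
    simp only [Acoef_succ, Acoef_zero]
    have e1 : x + ((0:ℕ)+1 : ℕ) * z = x + z := by push_cast; ring
    have e2 : x - 1 + ((0:ℕ)+1 : ℕ) * z = x + z - 1 := by push_cast; ring
    rw [e1, e2, gchoose_one, gchoose_one, gchoose_zero, gchoose_zero]
    push_cast; ring
  | succ m =>
    simp only [Acoef_succ]
    set B : ℤ := x + (m+2 : ℕ) * z with hB
    have e1 : x - 1 + (m+1+1 : ℕ) * z = B - 1 := by rw [hB]; try push_cast; try ring
    have e2 : x + z - 1 + (m+1 : ℕ) * z = B - 1 := by rw [hB]; try push_cast; try ring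
    have e3 : x + (m+1+1 : ℕ) * z = B := by rw [hB]; try push_cast; try ring
    try rw [e1]
    try rw [e2]
    try rw [e3]
    have p1 := gchoose_pascal B (m+1)
    have p2 := gchoose_pascal (B-1) m
    linear_combination p1 - (z : ℚ) * p2

lemma Acoef_x_zero (z : ℤ) (k : ℕ) : Acoef 0 z (k+1) = 0 := by
  rw [Acoef_succ]
  have habs := gchoose_absorb (0 + (k+1 : ℕ) * z) k
  have h1 : ((k:ℚ) + 1) ≠ 0 := by positivity
  have harg : ((0 + (k+1 : ℕ) * z : ℤ) : ℚ) = ((k:ℚ)+1) * (z:ℚ) := by push_cast; ring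
  rw [harg] at habs
  have h2 : ((k:ℚ)+1) * gchoose (0 + (k+1 : ℕ) * z) (k+1)
      = ((k:ℚ)+1) * ((z:ℚ) * gchoose (0 + (k+1 : ℕ) * z - 1) k) := by
    rw [habs]; ring
  have := mul_left_cancel₀ h1 h2
  rw [this]; ring

/-- The Rothe convolution sum. -/
noncomputable def Ssum (z x y : ℤ) (n : ℕ) : ℚ :=
  ∑ k ∈ Finset.range (n+1), Acoef x z k * gchoose (y + ((n - k : ℕ) : ℤ) * z) (n - k)

lemma Ssum_step (z x y : ℤ) (m : ℕ) :
    Ssum z x y (m+1) = Ssum z (x-1) y (m+1) + Ssum z (x+z-1) y m := by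
  unfold Ssum
  rw [Finset.sum_range_succ'
    (fun k => Acoef x z k * gchoose (y + ((m+1 - k : ℕ) : ℤ) * z) (m+1-k)) (m+1)]
  rw [Finset.sum_range_succ'
    (fun k => Acoef (x-1) z k * gchoose (y + ((m+1 - k : ℕ) : ℤ) * z) (m+1-k)) (m+1)]
  simp only [Nat.succ_sub_succ, Acoef_rec x z, Acoef_zero, add_mul, Finset.sum_add_distrib,
    Nat.sub_zero]
  ring

lemma gchoose_congr {a b : ℤ} (h : a = b) (k : ℕ) : gchoose a k = gchoose b k := by rw [h]

lemma rothe (z : ℤ) : ∀ (n : ℕ) (x y : ℤ), Ssum z x y n = gchoose (x + y + n * z) n := by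
  intro n
  induction n with
  | zero =>
    intro x y
    simp [Ssum, Acoef_zero, gchoose_zero]
  | succ m ih =>
    intro x
    induction x using Int.induction_on with
    | zero =>
      intro y
      unfold Ssum
      rw [Finset.sum_eq_single 0]
      · rw [Acoef_zero, one_mul]
        apply gchoose_congr
        push_cast; ring
      · intro b _ hb
        obtain ⟨c, rfl⟩ := Nat.exists_eq_succ_of_ne_zero hb
        rw [Acoef_x_zero, zero_mul]
      · intro h; exact absurd (Finset.mem_range.2 (by omega)) h
    | succ i hi =>
      intro y
      have hstep := Ssum_step z ((i:ℤ)+1) y m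
      have e1 : (i:ℤ) + 1 - 1 = (i:ℤ) := by ring
      have e2 : (i:ℤ) + 1 + z - 1 = (i:ℤ) + z := by ring
      rw [e1, e2, hi y, ih ((i:ℤ)+z) y] at hstep
      rw [hstep]
      have p := gchoose_pascal ((i:ℤ) + 1 + y + (m+1 : ℕ) * z) m
      have f1 : (i:ℤ) + 1 + y + (m+1 : ℕ) * z - 1 = (i:ℤ) + y + (m+1 : ℕ) * z := by ring
      have f2 : (i:ℤ) + z + y + (m : ℕ) * z = (i:ℤ) + y + (m+1 : ℕ) * z := by push_cast; ring
      rw [f1] at p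
      rw [gchoose_congr f2 m, p]
    | pred i hi =>
      intro y
      have hstep := Ssum_step z (-(i:ℤ)) y m
      have e2 : -(i:ℤ) + z - 1 = (-(i:ℤ) - 1) + z := by ring
      rw [hi y, e2, ih ((-(i:ℤ) - 1) + z) y] at hstep
      have p := gchoose_pascal (-(i:ℤ) + y + (m+1 : ℕ) * z) m
      have f1 : -(i:ℤ) + y + (m+1 : ℕ) * z - 1 = -(i:ℤ) - 1 + y + (m+1 : ℕ) * z := by ring
      have f2 : -(i:ℤ) - 1 + z + y + (m : ℕ) * z = -(i:ℤ) - 1 + y + (m+1 : ℕ) * z := by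
        push_cast; ring
      rw [f1] at p
      rw [gchoose_congr f2 m, p] at hstep
      have : Ssum z (-(i:ℤ) - 1) y (m+1) = gchoose (-(i:ℤ) - 1 + y + (m+1 : ℕ) * z) (m+1) := by
        linarith [hstep]
      exact this

lemma Acoef_eval (N m : ℕ) :
    Acoef (-(N:ℤ)) ((N:ℤ)+1) (m+1)
      = -((N:ℚ)/((m:ℚ)+1)) * ((((N+1)*m : ℕ)).choose m : ℚ) := by
  rw [Acoef_succ]
  have e1 : -(N:ℤ) + (m+1 : ℕ) * ((N:ℤ)+1) = (((N+1)*m + 1 : ℕ) : ℤ) := by push_cast; ring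
  have e2 : -(N:ℤ) + (m+1 : ℕ) * ((N:ℤ)+1) - 1 = (((N+1)*m : ℕ) : ℤ) := by push_cast; ring
  rw [e2, e1]
  have habs := gchoose_absorb ((((N+1)*m + 1 : ℕ) : ℤ)) m
  have e3 : (((N+1)*m + 1 : ℕ) : ℤ) - 1 = (((N+1)*m : ℕ) : ℤ) := by push_cast; ring
  rw [e3] at habs
  have h1 : ((m:ℚ) + 1) ≠ 0 := by positivity
  have hg : gchoose ((((N+1)*m + 1 : ℕ) : ℤ)) (m+1)
      = ((((N+1)*m + 1 : ℕ) : ℚ) / ((m:ℚ)+1)) * gchoose ((((N+1)*m : ℕ) : ℤ)) m := by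
    push_cast at habs ⊢
    field_simp
    linear_combination habs
  rw [hg, gchoose_natCast ((N+1)*m) m]
  push_cast
  field_simp
  ring

theorem binomial_recursion (N : ℕ) (hN : 1 ≤ N) (χ : ℤ) (d k : ℕ) (hk : k ≤ d) :
    gchoose (-χ - N + d * ((N : ℤ) + 1)) k
      = gchoose (-χ + d * ((N : ℤ) + 1)) k
        - ∑ ℓ ∈ Finset.Icc 1 k,
            (N : ℚ) / (ℓ : ℚ) * (((N + 1) * (ℓ - 1)).choose (ℓ - 1) : ℚ) *
              gchoose (-χ + ((d : ℤ) - ℓ) * ((N : ℤ) + 1)) (k - ℓ) := by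
  set z : ℤ := (N : ℤ) + 1 with hz
  set y : ℤ := -χ + ((d : ℤ) - k) * z with hy
  have hro := rothe z k (-(N:ℤ)) y
  have eR : -(N:ℤ) + y + (k : ℕ) * z = -χ - N + d * z := by rw [hy]; ring
  rw [gchoose_congr eR] at hro
  -- split off the ℓ = 0 term
  have hsplit : Finset.range (k+1) = insert 0 (Finset.Icc 1 k) := by
    ext a; simp only [Finset.mem_range, Finset.mem_insert, Finset.mem_Icc]; omega
  unfold Ssum at hro
  rw [hsplit, Finset.sum_insert (by simp)] at hro
  rw [Acoef_zero, one_mul, Nat.sub_zero] at hro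
  have e0 : y + (k : ℕ) * z = -χ + d * z := by rw [hy]; ring
  rw [gchoose_congr e0] at hro
  -- identify the remaining terms
  have hterm : ∀ ℓ ∈ Finset.Icc 1 k,
      Acoef (-(N:ℤ)) z ℓ * gchoose (y + ((k - ℓ : ℕ) : ℤ) * z) (k - ℓ)
        = -((N : ℚ) / (ℓ : ℚ) * (((N + 1) * (ℓ - 1)).choose (ℓ - 1) : ℚ) *
              gchoose (-χ + ((d : ℤ) - ℓ) * z) (k - ℓ)) := by
    intro ℓ hℓ
    rw [Finset.mem_Icc] at hℓ
    obtain ⟨m, rfl⟩ : ∃ m, ℓ = m + 1 := ⟨ℓ - 1, by omega⟩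
    rw [hz] at *
    rw [Acoef_eval N m]
    have earg : y + ((k - (m+1) : ℕ) : ℤ) * ((N:ℤ)+1)
        = -χ + ((d : ℤ) - (m+1 : ℕ)) * ((N:ℤ)+1) := by
      rw [hy]
      have : ((k - (m+1) : ℕ) : ℤ) = (k : ℤ) - ((m+1 : ℕ) : ℤ) := by
        rw [Int.ofNat_sub (by omega)]
      rw [this]; push_cast; ring
    rw [gchoose_congr earg]
    have hsub : (m + 1) - 1 = m := rfl
    rw [hsub]
    push_cast
    ring
  rw [Finset.sum_congr rfl hterm, Finset.sum_neg_distrib] at hro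
  linarith [hro]
end
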